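/- Let X ≥ 2, h(t) = max(1−|t|,0), and define k(t) = (X h(t) − (X−1) h(t/(1−X^{−1}))) / (log X)². Then the Fourier transform of k is k̂(t) = (X/(log²X)) (sin²(πt) − sin²(π(1−X^{−1})t))/(π²t²), k is supported in [−1,1], ‖k‖_∞ ≪ (log X)^{−2}, and k(log p/log X) = (log X)^{−2} whenever p ≤ X^{1−1/X}. -/

import Mathlib

open Real

set_option maxHeartbeats 1000000
open MeasureTheory intervalIntegral

noncomputable def tri (c x : ℝ) : ℝ := max (1 - |x / c|) 0

lemma tri_cont (c : ℝ) : Continuous (tri c) := by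
  unfold tri; continuity

lemma tri_supp (c : ℝ) (hc : 0 < c) : Function.support (tri c) ⊆ Set.Icc (-c) c := by
  intro x hx
  simp only [tri, Function.mem_support, ne_eq, max_eq_right_iff, not_le] at hx
  have h2 : |x / c| < 1 := by linarith
  rw [abs_div, abs_of_pos hc, div_lt_one hc] at h2
  exact Set.mem_Icc.2 ⟨neg_le_of_abs_le h2.le, le_of_abs_le h2.le⟩

lemma tri_integrable (c t : ℝ) (hc : 0 < c) :
    Integrable (fun x : ℝ => Complex.exp (-2 * π * Complex.I * x * t) * (tri c x : ℝ)) := by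
  apply Continuous.integrable_of_hasCompactSupport
  · exact (Complex.continuous_exp.comp (by continuity)).mul
      (Complex.continuous_ofReal.comp (tri_cont c))
  · apply HasCompactSupport.mul_left
    apply HasCompactSupport.intro (isCompact_Icc (a := -c) (b := c))
    intro x hx
    have := tri_supp c hc
    by_contra h
    exact hx (this (by simpa [Function.mem_support] using h))


lemma tri_fourier (c t : ℝ) (hc : 0 < c) (ht : t ≠ 0) :
    (∫ x : ℝ, Complex.exp (-2 * π * Complex.I * x * t) * (tri c x : ℝ))
      = ((Real.sin (π * c * t)) ^ 2 / (c * π ^ 2 * t ^ 2) : ℝ) := by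
  have hπ := Real.pi_pos
  obtain ⟨b, hbdef⟩ : ∃ b : ℂ, b = -2 * π * t * Complex.I := ⟨_, rfl⟩
  rw [show (fun x : ℝ => Complex.exp (-2 * π * Complex.I * x * t) * ((tri c x : ℝ) : ℂ)) = fun x : ℝ => Complex.exp (-2 * π * Complex.I * x * t) * ((tri c x : ℝ) : ℂ) from rfl]
  have hbr : (-2 * π * t : ℝ) ≠ 0 := by positivity
  have hb : b ≠ 0 := by
    rw [hbdef]
    intro h
    rcases mul_eq_zero.1 h with h | h
    · exact hbr (by exact_mod_cast (by push_cast at h; exact_mod_cast h : ((-2 * π * t : ℝ) : ℂ) = 0))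
    · exact Complex.I_ne_zero h
  have hcc : (c : ℂ) ≠ 0 := by exact_mod_cast hc.ne'
  have hexpfun : ∀ x : ℝ, Complex.exp (-2 * π * Complex.I * x * t) = Complex.exp (b * x) := by
    intro x; congr 1; rw [hbdef]; push_cast; ring
  have hxc : ∀ x : ℝ, HasDerivAt (fun x : ℝ => (x : ℂ)) 1 x := fun x => by
    simpa using (hasDerivAt_id x).ofReal_comp
  have hexp : ∀ x : ℝ, HasDerivAt (fun x : ℝ => Complex.exp (b * x)) (Complex.exp (b * x) * b) x := by
    intro x
    simpa [mul_comm] using ((hxc x).const_mul b).cexp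
  have hFp : ∀ x : ℝ, HasDerivAt
      (fun x : ℝ => (1 - (x : ℂ) / c) * Complex.exp (b * x) / b + Complex.exp (b * x) / (c * b ^ 2))
      ((1 - (x : ℂ) / c) * Complex.exp (b * x)) x := by
    intro x
    have hlin : HasDerivAt (fun x : ℝ => 1 - (x : ℂ) / c) (-(1 / c)) x := by
      simpa using ((hxc x).div_const (c : ℂ)).const_sub 1
    have h := (((hlin.mul (hexp x)).div_const b).add ((hexp x).div_const ((c : ℂ) * b ^ 2)))
    convert h using 1
    case e'_4 => rfl
    case e'_8 => rfl
    field_simp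
    ring
  have hFm : ∀ x : ℝ, HasDerivAt
      (fun x : ℝ => (1 + (x : ℂ) / c) * Complex.exp (b * x) / b - Complex.exp (b * x) / (c * b ^ 2))
      ((1 + (x : ℂ) / c) * Complex.exp (b * x)) x := by
    intro x
    have hlin : HasDerivAt (fun x : ℝ => 1 + (x : ℂ) / c) (1 / c) x := by
      simpa using ((hxc x).div_const (c : ℂ)).const_add 1
    have h := (((hlin.mul (hexp x)).div_const b).sub ((hexp x).div_const ((c : ℂ) * b ^ 2)))
    convert h using 1
    case e'_4 => rfl
    case e'_8 => rfl
    field_simp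
    ring
  have hint : Integrable (fun x : ℝ => Complex.exp (b * x) * (tri c x : ℝ)) := by
    exact (tri_integrable c t hc).congr
      (Filter.Eventually.of_forall fun x => by simp only [hexpfun])
  have hred : (∫ x : ℝ, Complex.exp (-2 * π * Complex.I * x * t) * (tri c x : ℝ))
      = ∫ x in (-c)..c, Complex.exp (b * x) * (tri c x : ℝ) := by
    simp_rw [hexpfun]
    rw [intervalIntegral.integral_of_le (by linarith), ← MeasureTheory.integral_Icc_eq_integral_Ioc,
      MeasureTheory.setIntegral_eq_integral_of_forall_compl_eq_zero]
    intro x hx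
    have : tri c x = 0 := by
      by_contra h
      exact hx (tri_supp c hc (by simpa [Function.mem_support] using h))
    simp [this]
  rw [hred]
  rw [← intervalIntegral.integral_add_adjacent_intervals
    (hint.intervalIntegrable (a := -c) (b := 0)) (hint.intervalIntegrable (a := 0) (b := c))]
  have hIp : (∫ x in (0:ℝ)..c, Complex.exp (b * x) * (tri c x : ℝ))
      = Complex.exp (b * c) / (c * b ^ 2) - (1 / b + 1 / (c * b ^ 2)) := by
    rw [intervalIntegral.integral_congr (g := fun x : ℝ => (1 - (x : ℂ) / c) * Complex.exp (b * x))]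
    · rw [intervalIntegral.integral_eq_sub_of_hasDerivAt (fun x _ => hFp x)
        (Continuous.intervalIntegrable (by fun_prop) 0 c)]
      push_cast
      field_simp
      simp only [mul_zero, zero_mul, Complex.exp_zero]
      ring
    · intro x hx
      rw [Set.uIcc_of_le hc.le] at hx
      have htri : tri c x = 1 - x / c := by
        unfold tri
        rw [abs_of_nonneg (div_nonneg hx.1 hc.le),
          max_eq_left (by rw [sub_nonneg, div_le_one hc]; exact hx.2)]
      simp only [htri]
      push_cast
      ring
  have hIm : (∫ x in (-c:ℝ)..0, Complex.exp (b * x) * (tri c x : ℝ))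
      = (1 / b - 1 / (c * b ^ 2)) + Complex.exp (b * (-c : ℝ)) / (c * b ^ 2) := by
    rw [intervalIntegral.integral_congr (g := fun x : ℝ => (1 + (x : ℂ) / c) * Complex.exp (b * x))]
    · rw [intervalIntegral.integral_eq_sub_of_hasDerivAt (fun x _ => hFm x)
        (Continuous.intervalIntegrable (by fun_prop) (-c) 0)]
      push_cast
      field_simp
      simp only [mul_zero, zero_mul, Complex.exp_zero]
      ring
    · intro x hx
      rw [Set.uIcc_of_le (by linarith : (-c:ℝ) ≤ 0)] at hx
      have hge : -1 ≤ x / c := by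
        rw [neg_le, ← neg_div]
        exact (div_le_one hc).2 (by linarith [hx.1])
      have htri : tri c x = 1 + x / c := by
        unfold tri
        rw [abs_of_nonpos (div_nonpos_of_nonpos_of_nonneg hx.2 hc.le),
          max_eq_left (by linarith : (0:ℝ) ≤ 1 - -(x / c))]
        ring
      simp only [htri]
      push_cast
      ring
  rw [hIp, hIm]
  have hb2 : b ^ 2 = ((-(4 * π ^ 2 * t ^ 2) : ℝ) : ℂ) := by
    rw [hbdef, mul_pow]
    rw [Complex.I_sq]
    push_cast
    ring
  have h1 : b * (c : ℂ) = ((-(2 * π * c * t) : ℝ) : ℂ) * Complex.I := by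
    rw [hbdef]; push_cast; ring
  have h2 : b * ((-c : ℝ) : ℂ) = (((2 * π * c * t) : ℝ) : ℂ) * Complex.I := by
    rw [hbdef]; push_cast; ring
  have hsum : Complex.exp (b * c) + Complex.exp (b * (-c : ℝ))
      = ((2 * Real.cos (2 * π * c * t) : ℝ) : ℂ) := by
    rw [h1, h2, Complex.exp_mul_I, Complex.exp_mul_I,
      ← Complex.ofReal_cos, ← Complex.ofReal_sin, ← Complex.ofReal_cos, ← Complex.ofReal_sin]
    push_cast [Real.cos_neg, Real.sin_neg]
    ring
  have hcollect : (1 / b - 1 / (c * b ^ 2)) + Complex.exp (b * (-c : ℝ)) / (c * b ^ 2)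
      + (Complex.exp (b * c) / (c * b ^ 2) - (1 / b + 1 / (c * b ^ 2)))
      = (Complex.exp (b * c) + Complex.exp (b * (-c : ℝ)) - 2) / (c * b ^ 2) := by
    rw [sub_div, add_div]
    ring
  rw [hcollect, hsum, hb2]
  rw [show ((2 * Real.cos (2 * π * c * t) : ℝ) : ℂ) - 2
      = ((2 * Real.cos (2 * π * c * t) - 2 : ℝ) : ℂ) by push_cast; ring,
    show ((c : ℂ) * ((-(4 * π ^ 2 * t ^ 2) : ℝ) : ℂ)) = ((c * -(4 * π ^ 2 * t ^ 2) : ℝ) : ℂ)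
      by push_cast; ring,
    ← Complex.ofReal_div]
  norm_cast
  have hcos : Real.cos (2 * π * c * t) = 1 - 2 * Real.sin (π * c * t) ^ 2 := by
    rw [show 2 * π * c * t = 2 * (π * c * t) by ring, Real.cos_two_mul]
    have := Real.sin_sq_add_cos_sq (π * c * t)
    nlinarith [this]
  rw [hcos]
  have hπ0 : (π : ℝ) ≠ 0 := hπ.ne'
  field_simp
  ring


/-- The kernel k(t) = (X h(t) − (X−1) h(t/(1−X⁻¹)))/(log X)², where h is the
triangle function. -/
noncomputable def kKernel (X t : ℝ) : ℝ :=
  (X * max (1 - |t|) 0 - (X - 1) * max (1 - |t / (1 - X⁻¹)|) 0) / (Real.log X) ^ 2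

/-- Properties of the kernel k: its Fourier transform, support in [−1,1],
sup-norm bound ≪ (log X)⁻², and the value (log X)⁻² for p ≤ X^{1−1/X}. -/
theorem kKernel_properties :
    ∃ C : ℝ, 0 < C ∧ ∀ X : ℝ, 2 ≤ X →
      (∀ t : ℝ, t ≠ 0 →
        (∫ x : ℝ, Complex.exp (-2 * π * Complex.I * x * t) * (kKernel X x : ℝ))
          = ((X / (Real.log X) ^ 2) *
              ((Real.sin (π * t)) ^ 2 - (Real.sin (π * (1 - X⁻¹) * t)) ^ 2)
                / (π ^ 2 * t ^ 2) : ℝ)) ∧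
      (∀ t : ℝ, 1 < |t| → kKernel X t = 0) ∧
      (∀ t : ℝ, |kKernel X t| ≤ C / (Real.log X) ^ 2) ∧
      (∀ p : ℝ, 1 ≤ p → p ≤ X ^ (1 - 1 / X) →
        kKernel X (Real.log p / Real.log X) = ((Real.log X) ^ 2)⁻¹) := by
  refine ⟨1, one_pos, fun X hX => ?_⟩
  have hπ := Real.pi_pos
  have hX0 : (0:ℝ) < X := by linarith
  have hXinv : X⁻¹ ≤ 1/2 := by
    rw [inv_le_comm₀ (by linarith) (by norm_num)]
    linarith
  have hXinv0 : 0 < X⁻¹ := inv_pos.2 hX0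
  set c : ℝ := 1 - X⁻¹ with hcdef
  have hc : 0 < c := by rw [hcdef]; linarith
  have hc1 : c ≤ 1 := by rw [hcdef]; linarith
  have hXc : X - 1 = X * c := by
    rw [hcdef]
    field_simp
  have hL : 0 < Real.log X := Real.log_pos (by linarith)
  have hL2 : (0:ℝ) < (Real.log X) ^ 2 := by positivity
  have hk : ∀ x : ℝ, kKernel X x = (X * tri 1 x - (X - 1) * tri c x) / (Real.log X) ^ 2 := by
    intro x
    simp [kKernel, tri, div_one, hcdef]
  -- the value of the numerator on |t| ≤ c
  have hval : ∀ x : ℝ, |x| ≤ c → X * tri 1 x - (X - 1) * tri c x = 1 := by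
    intro x hx
    have hx1 : |x| ≤ 1 := le_trans hx hc1
    have h1 : tri 1 x = 1 - |x| := by
      unfold tri
      rw [div_one, max_eq_left (by linarith)]
    have h2 : tri c x = 1 - |x| / c := by
      unfold tri
      rw [abs_div, abs_of_pos hc, max_eq_left (by
        rw [sub_nonneg, div_le_one hc]; exact hx)]
    have h0 : X ≠ 0 := hX0.ne'
    have hcne : c ≠ 0 := hc.ne'
    rw [h1, h2, hXc]
    field_simp
    linear_combination (1 - X⁻¹ + X⁻¹) * mul_inv_cancel₀ h0
  refine ⟨?_, ?_, ?_, ?_⟩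
  · -- Fourier transform
    intro t ht
    have hF1 := tri_fourier 1 t one_pos ht
    have hFc := tri_fourier c t hc ht
    have hi1 := tri_integrable 1 t one_pos
    have hic := tri_integrable c t hc
    have heq : ∀ x : ℝ,
        Complex.exp (-2 * π * Complex.I * x * t) * ((kKernel X x : ℝ) : ℂ)
        = ((X / (Real.log X) ^ 2 : ℝ) : ℂ) *
            (Complex.exp (-2 * π * Complex.I * x * t) * (tri 1 x : ℝ))
          - (((X - 1) / (Real.log X) ^ 2 : ℝ) : ℂ) *
            (Complex.exp (-2 * π * Complex.I * x * t) * (tri c x : ℝ)) := by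
      intro x
      rw [hk x]
      push_cast
      ring
    rw [MeasureTheory.integral_congr_ae (Filter.Eventually.of_forall heq),
      MeasureTheory.integral_sub (hi1.const_mul _) (hic.const_mul _),
      MeasureTheory.integral_const_mul, MeasureTheory.integral_const_mul, hF1, hFc]
    rw [show ((X / (Real.log X) ^ 2 : ℝ) : ℂ) * ((Real.sin (π * 1 * t) ^ 2 / (1 * π ^ 2 * t ^ 2) : ℝ) : ℂ)
        - (((X - 1) / (Real.log X) ^ 2 : ℝ) : ℂ) * ((Real.sin (π * c * t) ^ 2 / (c * π ^ 2 * t ^ 2) : ℝ) : ℂ)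
        = ((X / (Real.log X) ^ 2 * (Real.sin (π * 1 * t) ^ 2 / (1 * π ^ 2 * t ^ 2))
            - (X - 1) / (Real.log X) ^ 2 * (Real.sin (π * c * t) ^ 2 / (c * π ^ 2 * t ^ 2)) : ℝ) : ℂ)
        by push_cast; ring]
    norm_cast
    rw [hXc]
    field_simp
  · -- support
    intro t ht
    rw [hk t]
    have h1 : tri 1 t = 0 := by
      unfold tri
      rw [div_one, max_eq_right (by linarith)]
    have h2 : tri c t = 0 := by
      unfold tri
      rw [abs_div, abs_of_pos hc, max_eq_right ?_]
      have : 1 ≤ |t| / c := by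
        rw [le_div_iff₀ hc]
        nlinarith
      linarith
    rw [h1, h2]
    ring_nf
  · -- sup-norm bound
    intro t
    have hXX : X * X⁻¹ = 1 := mul_inv_cancel₀ hX0.ne'
    have hN : |X * tri 1 t - (X - 1) * tri c t| ≤ 1 := by
      rcases le_or_gt |t| c with h | h
      · rw [hval t h]; norm_num
      · rcases le_or_gt |t| 1 with h1 | h1
        · have h2 : tri c t = 0 := by
            unfold tri
            rw [abs_div, abs_of_pos hc]
            exact max_eq_right (by
              rw [sub_nonpos, le_div_iff₀ hc]
              nlinarith)
          have h3 : tri 1 t = 1 - |t| := by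
            unfold tri
            rw [div_one, max_eq_left (by linarith)]
          rw [h2, h3, mul_zero, sub_zero,
            abs_of_nonneg (by nlinarith [abs_nonneg t] : (0:ℝ) ≤ X * (1 - |t|))]
          nlinarith
        · have h2 : tri c t = 0 := by
            unfold tri
            rw [abs_div, abs_of_pos hc]
            refine max_eq_right (by
              rw [sub_nonpos, le_div_iff₀ hc]
              nlinarith)
          have h3 : tri 1 t = 0 := by
            unfold tri
            rw [div_one, max_eq_right (by linarith)]
          rw [h2, h3]
          norm_num
    rw [hk t, abs_div, abs_of_pos hL2]
    gcongr
  · -- value at log p / log X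
    intro p hp hpX
    have hp0 : (0:ℝ) < p := by linarith
    have hlogp : 0 ≤ Real.log p := Real.log_nonneg hp
    have hlogle : Real.log p ≤ c * Real.log X := by
      have := Real.log_le_log hp0 hpX
      rwa [Real.log_rpow hX0, show (1 - 1/X) = c by rw [hcdef]; ring] at this
      -- careful with mul_comm direction
    have ht : |Real.log p / Real.log X| ≤ c := by
      rw [abs_of_nonneg (div_nonneg hlogp hL.le), div_le_iff₀ hL]
      linarith
    rw [hk _, hval _ ht, one_div]
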